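/- Suppose μ^ν converge weakly to μ on the nonempty closed set Ξ ⊆ ℝ^d. Let g : Ξ × ℝⁿ → ℝ be jointly Borel measurable with g(ξ,·) lsc for each ξ, and let g^ν : Ξ × ℝⁿ → ℝ satisfy: g(·,x) and all g^ν(·,x) are uniformly bounded on Ξ, locally uniformly in x; (i) ξ ↦ g^ν(ξ,x) is continuous on Ξ for every x and ν; (ii) for every ξ^ν → ξ in Ξ and x^ν → x, liminf_ν g^ν(ξ^ν,x^ν) ≥ g(ξ,x). Then: (a) for any infinite N ⊆ ℕ and any x^ν → x along N, liminf_{ν∈N} E_{μ^ν}[g^ν(ξ,x^ν)] ≥ E_μ[g(ξ,x)]; (b) for any fixed x₀ ∈ ℝⁿ, there exists a sequence of integers i_ν° ↑ ∞ such that for every sequence of integers i_ν ↑ ∞ with i_ν ≤ i_ν° and all sufficiently large ν, |E_{μ^ν}[g^{i_ν}(ξ,x₀)] − E_μ[g^{i_ν}(ξ,x₀)]| ≤ 1/i_ν. -/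
import Mathlib

open MeasureTheory Filter Topology Metric Set Pointwise

noncomputable section

section auxiliary

variable {E : Type*} [MeasurableSpace E] [MetricSpace E] [BorelSpace E]
  [SecondCountableTopology E]

theorem key_liminf
    (Ξ : Set E) (hΞne : Ξ.Nonempty) (hΞcl : IsClosed Ξ)
    (μ : Measure E) [IsProbabilityMeasure μ] (hμΞ : μ Ξᶜ = 0)
    (μk : ℕ → Measure E) [∀ k, IsProbabilityMeasure (μk k)]
    (hμkΞ : ∀ k, μk k Ξᶜ = 0)
    (hweak : ∀ ℓ : E → ℝ, ContinuousOn ℓ Ξ → (∃ C : ℝ, ∀ ξ ∈ Ξ, |ℓ ξ| ≤ C) →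
        Tendsto (fun k => ∫ ξ in Ξ, ℓ ξ ∂(μk k)) atTop (𝓝 (∫ ξ in Ξ, ℓ ξ ∂μ)))
    (f : E → ℝ) (hf : Measurable f)
    (fk : ℕ → E → ℝ) (hfkc : ∀ k, ContinuousOn (fk k) Ξ)
    (M : ℝ) (hMf : ∀ ξ ∈ Ξ, |f ξ| ≤ M) (hMfk : ∀ k, ∀ ξ ∈ Ξ, |fk k ξ| ≤ M)
    (hlsc : ∀ ξ ∈ Ξ, ∀ ξs : ℕ → E, (∀ k, ξs k ∈ Ξ) → Tendsto ξs atTop (𝓝 ξ) →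
        f ξ ≤ liminf (fun k => fk k (ξs k)) atTop) :
    (∫ ξ, f ξ ∂μ) ≤ liminf (fun k => ∫ ξ, fk k ξ ∂(μk k)) atTop := by
  haveI : Nonempty Ξ := hΞne.to_subtype
  have hM0 : 0 ≤ M := le_trans (abs_nonneg _) (hMf _ hΞne.choose_spec)
  -- restriction facts
  have hres : ∀ (m : Measure E), m Ξᶜ = 0 → m.restrict Ξ = m := fun m hm =>
    Measure.restrict_eq_self_of_ae_mem (mem_ae_iff.mpr hm)
  have hres1 : μ.restrict Ξ = μ := hres μ hμΞ
  have hres2 : ∀ k, (μk k).restrict Ξ = μk k := fun k => hres _ (hμkΞ k)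
  have haeΞ : ∀ (m : Measure E), m Ξᶜ = 0 → ∀ᵐ ξ ∂m, ξ ∈ Ξ := fun m hm => mem_ae_iff.mpr hm
  -- the regularized functions
  set H : ℕ → E → ℝ := fun j ξ => ⨅ p : ℕ × Ξ, (fk (j + p.1) p.2 + j * dist (p.2 : E) ξ)
    with hHdef
  have hbdd : ∀ j (ξ : E),
      BddBelow (range fun p : ℕ × Ξ => fk (j + p.1) p.2 + j * dist (p.2 : E) ξ) := by
    intro j ξ
    refine ⟨-M, ?_⟩
    rintro _ ⟨p, rfl⟩
    dsimp only
    have h1 := (abs_le.mp (hMfk (j + p.1) _ p.2.2)).1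
    have h2 : 0 ≤ (j : ℝ) * dist (p.2 : E) ξ :=
      mul_nonneg (Nat.cast_nonneg _) dist_nonneg
    linarith
  have hHlb : ∀ j ξ, -M ≤ H j ξ := by
    intro j ξ
    refine le_ciInf fun p => ?_
    have h1 := (abs_le.mp (hMfk (j + p.1) _ p.2.2)).1
    have h2 : 0 ≤ (j : ℝ) * dist (p.2 : E) ξ :=
      mul_nonneg (Nat.cast_nonneg _) dist_nonneg
    linarith
  have hHle : ∀ j mm, ∀ ξ ∈ Ξ, H j ξ ≤ fk (j + mm) ξ := by
    intro j mm ξ hξ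
    have := ciInf_le (hbdd j ξ) (mm, ⟨ξ, hξ⟩)
    simpa using this
  have hHleM : ∀ j, ∀ ξ ∈ Ξ, H j ξ ≤ M := by
    intro j ξ hξ
    exact le_trans (hHle j 0 ξ hξ) (by simpa using (abs_le.mp (hMfk (j + 0) _ hξ)).2)
  have hHshift : ∀ j (ξ ξ' : E), H j ξ - j * dist ξ ξ' ≤ H j ξ' := by
    intro j ξ ξ'
    refine le_ciInf fun p => ?_
    rw [sub_le_iff_le_add]
    have h1 := ciInf_le (hbdd j ξ) p
    have tri : dist (p.2 : E) ξ ≤ dist (p.2 : E) ξ' + dist ξ' ξ := dist_triangle _ _ _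
    have hj : (0:ℝ) ≤ j := Nat.cast_nonneg _
    have := mul_le_mul_of_nonneg_left tri hj
    rw [dist_comm ξ ξ']
    nlinarith [h1]
  have hHlip : ∀ j : ℕ, LipschitzWith j (H j) := by
    intro j
    apply LipschitzWith.of_dist_le_mul
    intro x y
    rw [Real.dist_eq, abs_sub_le_iff]
    constructor
    · have := hHshift j x y
      push_cast
      linarith
    · have := hHshift j y x
      rw [dist_comm x y]
      push_cast
      linarith
  have hHcont : ∀ j, Continuous (H j) := fun j => (hHlip j).continuous
  have hHmono : ∀ ξ, Monotone fun j => H j ξ := by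
    intro ξ
    apply monotone_nat_of_le_succ
    intro j
    refine le_ciInf fun p => ?_
    have h1 := ciInf_le (hbdd j ξ) (1 + p.1, p.2)
    have harith : j + (1 + p.1) = j + 1 + p.1 := by omega
    rw [harith] at h1
    have hd : (j:ℝ) * dist (p.2 : E) ξ ≤ ((j:ℕ)+1 : ℕ) * dist (p.2 : E) ξ := by
      apply mul_le_mul_of_nonneg_right _ dist_nonneg
      push_cast; linarith
    push_cast at hd ⊢
    linarith
  -- truncated versions
  set G : ℕ → E → ℝ := fun j ξ => min (H j ξ) M with hGdef
  have hGcont : ∀ j, Continuous (G j) := fun j => (hHcont j).min continuous_const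
  have hGeq : ∀ j, ∀ ξ ∈ Ξ, G j ξ = H j ξ := fun j ξ hξ => min_eq_left (hHleM j ξ hξ)
  have hGabs : ∀ j ξ, |G j ξ| ≤ M := by
    intro j ξ
    rw [abs_le]
    exact ⟨le_min (hHlb j ξ) (by linarith), min_le_right _ _⟩
  have hGmono : ∀ ξ, Monotone fun j => G j ξ :=
    fun ξ _ _ h => min_le_min (hHmono ξ h) le_rfl
  have hGle : ∀ j k, j ≤ k → ∀ ξ ∈ Ξ, G j ξ ≤ fk k ξ := by
    intro j k hjk ξ hξ
    rw [hGeq j ξ hξ]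
    have := hHle j (k - j) ξ hξ
    rwa [Nat.add_sub_cancel' hjk] at this
  have hGbddA : ∀ ξ, BddAbove (range fun j => G j ξ) := by
    intro ξ
    exact ⟨M, by rintro _ ⟨j, rfl⟩; exact min_le_right _ _⟩
  -- the key pointwise inequality
  have hsup : ∀ ξ ∈ Ξ, f ξ ≤ ⨆ j, G j ξ := by
    intro ξ hξ
    by_contra hcon
    push_neg at hcon
    set S := ⨆ j, G j ξ with hS
    set c := (S + f ξ) / 2 with hc
    have hSc : S < c := by rw [hc]; linarith
    have hcf : c < f ξ := by rw [hc]; linarith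
    have hHj : ∀ j, H j ξ < c := by
      intro j
      have h1 : G j ξ ≤ S := le_ciSup (hGbddA ξ) j
      rw [← hGeq j ξ hξ]
      exact lt_of_le_of_lt h1 hSc
    have hex : ∀ j : ℕ, ∃ p : ℕ × Ξ, fk (j + p.1) p.2 + j * dist (p.2 : E) ξ < c := by
      intro j
      exact exists_lt_of_ciInf_lt (hHj j)
    choose p hp using hex
    set m : ℕ → ℕ := fun j => (p j).1 with hmdef
    set ζ : ℕ → Ξ := fun j => (p j).2 with hζdef
    have hfklt : ∀ j, fk (j + m j) (ζ j) < c := by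
      intro j
      have h2 : 0 ≤ (j : ℝ) * dist (ζ j : E) ξ := mul_nonneg (Nat.cast_nonneg _) dist_nonneg
      have := hp j
      linarith
    have hcM : 0 < c + M := by
      have h1 := (abs_le.mp (hMfk (0 + m 0) _ (ζ 0).2)).1
      have := hfklt 0
      linarith
    have hdist : ∀ j : ℕ, (j : ℝ) * dist (ζ j : E) ξ < c + M := by
      intro j
      have h1 := (abs_le.mp (hMfk (j + m j) _ (ζ j).2)).1
      have := hp j
      linarith
    have hζtend : Tendsto (fun j => (ζ j : E)) atTop (𝓝 ξ) := by
      rw [Metric.tendsto_atTop]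
      intro εd hεd
      obtain ⟨J, hJ⟩ := exists_nat_gt ((c + M) / εd)
      have hJpos : (0:ℝ) < J := lt_trans (div_pos hcM hεd) hJ
      refine ⟨J + 1, fun j hj => ?_⟩
      have hjJ : (J:ℝ) ≤ j := by exact_mod_cast Nat.le_of_succ_le hj
      have hj0 : (0:ℝ) < j := lt_of_lt_of_le hJpos hjJ
      have h1 : dist (ζ j : E) ξ < (c + M) / j := by
        rw [lt_div_iff₀ hj0]
        linarith [hdist j, mul_comm (dist (ζ j : E) ξ) (j:ℝ)]
      have h2 : (c + M) / (j:ℝ) ≤ (c + M) / J := div_le_div_of_nonneg_left hcM.le hJpos hjJ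
      have h3 : (c + M) / (J:ℝ) < εd := by
        rw [div_lt_iff₀ hJpos]
        have := (div_lt_iff₀ hεd).mp hJ
        linarith
      linarith
    -- build the full sequence
    classical
    set ξs : ℕ → E := fun k => if h : ∃ j, j + m j = k then (ζ (Nat.find h) : E) else ξ
      with hξsdef
    have hξsΞ : ∀ k, ξs k ∈ Ξ := by
      intro k
      rw [hξsdef]
      dsimp only
      split
      · exact (ζ _).2
      · exact hξ
    have hξstend : Tendsto ξs atTop (𝓝 ξ) := by
      rw [Metric.tendsto_atTop]
      intro εd hεd
      rw [Metric.tendsto_atTop] at hζtend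
      obtain ⟨J, hJ⟩ := hζtend εd hεd
      set B := (Finset.range J).sup (fun j => j + m j) with hB
      refine ⟨B + 1, fun k hk => ?_⟩
      rw [hξsdef]
      dsimp only
      split
      · rename_i h
        have hfind := Nat.find_spec h
        have hge : J ≤ Nat.find h := by
          by_contra hlt
          push_neg at hlt
          have : Nat.find h + m (Nat.find h) ≤ B :=
            Finset.le_sup (f := fun j => j + m j) (Finset.mem_range.mpr hlt)
          omega
        exact hJ _ hge
      · simpa using hεd
    have hmain := hlsc ξ hξ ξs hξsΞ hξstend
    have hfreq : ∃ᶠ k in atTop, fk k (ξs k) ≤ c := by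
      rw [frequently_atTop]
      intro K
      refine ⟨K + m K, Nat.le_add_right _ _, ?_⟩
      have hwit : ∃ j, j + m j = K + m K := ⟨K, rfl⟩
      rw [hξsdef]
      dsimp only
      rw [dif_pos hwit]
      have hfind := Nat.find_spec hwit
      have := hfklt (Nat.find hwit)
      rw [hfind] at this
      exact this.le
    have hbddb : IsBoundedUnder (· ≥ ·) atTop (fun k => fk k (ξs k)) :=
      isBoundedUnder_of ⟨-M, fun k => (abs_le.mp (hMfk k _ (hξsΞ k))).1⟩
    have := liminf_le_of_frequently_le hfreq hbddb
    exact absurd (le_trans hmain this) (not_le.mpr hcf)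
  -- now the integral part
  set F : E → ℝ := fun ξ => ⨆ j, G j ξ with hFdef
  have hFlsc : LowerSemicontinuous F := by
    intro x y hy
    obtain ⟨j, hj⟩ := exists_lt_of_lt_ciSup hy
    have : ∀ᶠ x' in 𝓝 x, y < G j x' := (hGcont j).lowerSemicontinuous x y hj
    exact this.mono fun x' hx' => lt_of_lt_of_le hx' (le_ciSup (hGbddA x') j)
  have hFmeas : Measurable F := hFlsc.measurable
  have hFabs : ∀ ξ, |F ξ| ≤ M := by
    intro ξ
    rw [abs_le]
    constructor
    · exact le_trans (abs_le.mp (hGabs 0 ξ)).1 (le_ciSup (hGbddA ξ) 0)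
    · exact ciSup_le fun j => (abs_le.mp (hGabs j ξ)).2
  have hintG : ∀ (m : Measure E) [IsProbabilityMeasure m], ∀ j, Integrable (G j) m := by
    intro m hm j
    refine Integrable.mono' (integrable_const M) (hGcont j).aestronglyMeasurable ?_
    exact Eventually.of_forall fun ξ => by rw [Real.norm_eq_abs]; exact hGabs j ξ
  have hintF : Integrable F μ := by
    refine Integrable.mono' (integrable_const M) hFmeas.aestronglyMeasurable ?_
    exact Eventually.of_forall fun ξ => by rw [Real.norm_eq_abs]; exact hFabs ξ
  have hintf : Integrable f μ := by
    refine Integrable.mono' (integrable_const M) hf.aestronglyMeasurable ?_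
    exact (haeΞ μ hμΞ).mono fun ξ hξ => by rw [Real.norm_eq_abs]; exact hMf ξ hξ
  have hfF : ∫ ξ, f ξ ∂μ ≤ ∫ ξ, F ξ ∂μ := by
    refine integral_mono_ae hintf hintF ?_
    exact (haeΞ μ hμΞ).mono fun ξ hξ => hsup ξ hξ
  have hGtoF : Tendsto (fun j => ∫ ξ, G j ξ ∂μ) atTop (𝓝 (∫ ξ, F ξ ∂μ)) := by
    refine integral_tendsto_of_tendsto_of_monotone (fun j => hintG μ j) hintF
      (Eventually.of_forall fun ξ => hGmono ξ) (Eventually.of_forall fun ξ => ?_)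
    exact tendsto_atTop_ciSup (hGmono ξ) (hGbddA ξ)
  -- conclude
  have hintfk : ∀ k, Integrable (fk k) (μk k) := by
    intro k
    have hmeas : AEStronglyMeasurable (fk k) (μk k) := by
      have := (ContinuousOn.aemeasurable (hfkc k) hΞcl.measurableSet :
        AEMeasurable (fk k) ((μk k).restrict Ξ))
      rw [hres2 k] at this
      exact this.aestronglyMeasurable
    refine Integrable.mono' (integrable_const M) hmeas ?_
    exact (haeΞ _ (hμkΞ k)).mono fun ξ hξ => by rw [Real.norm_eq_abs]; exact hMfk k ξ hξ
  have hIbdd : IsBoundedUnder (· ≤ ·) atTop (fun k => ∫ ξ, fk k ξ ∂(μk k)) := by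
    refine isBoundedUnder_of ⟨M, fun k => ?_⟩
    calc ∫ ξ, fk k ξ ∂(μk k) ≤ ∫ _, M ∂(μk k) := by
          refine integral_mono_ae (hintfk k) (integrable_const M) ?_
          exact (haeΞ _ (hμkΞ k)).mono fun ξ hξ => (abs_le.mp (hMfk k ξ hξ)).2
      _ = M := by simp
  refine le_of_forall_pos_le_add fun ε hε => ?_
  obtain ⟨j, hj⟩ := (hGtoF.eventually (eventually_gt_nhds (show ∫ ξ, F ξ ∂μ - ε < ∫ ξ, F ξ ∂μ by linarith))).exists
  have hw := hweak (G j) (hGcont j).continuousOn ⟨M, fun ξ _ => hGabs j ξ⟩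
  simp only [hres1, hres2] at hw
  have hliminfG : liminf (fun k => ∫ ξ, G j ξ ∂(μk k)) atTop = ∫ ξ, G j ξ ∂μ :=
    hw.liminf_eq
  have hmono : ∀ᶠ k in atTop, ∫ ξ, G j ξ ∂(μk k) ≤ ∫ ξ, fk k ξ ∂(μk k) := by
    rw [eventually_atTop]
    refine ⟨j, fun k hk => ?_⟩
    refine integral_mono_ae (hintG _ j) (hintfk k) ?_
    exact (haeΞ _ (hμkΞ k)).mono fun ξ hξ => hGle j k hk ξ hξ
  have hlift : liminf (fun k => ∫ ξ, G j ξ ∂(μk k)) atTop ≤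
      liminf (fun k => ∫ ξ, fk k ξ ∂(μk k)) atTop := by
    refine liminf_le_liminf hmono ?_ ?_
    · refine isBoundedUnder_of ⟨-M, fun k => ?_⟩
      calc (-M : ℝ) = ∫ _, (-M : ℝ) ∂(μk k) := by simp
        _ ≤ ∫ ξ, G j ξ ∂(μk k) := by
            refine integral_mono_ae (integrable_const _) (hintG _ j) ?_
            exact Eventually.of_forall fun ξ => (abs_le.mp (hGabs j ξ)).1
    · exact hIbdd.isCoboundedUnder_ge
  calc ∫ ξ, f ξ ∂μ ≤ ∫ ξ, F ξ ∂μ := hfF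
    _ ≤ ∫ ξ, G j ξ ∂μ + ε := by linarith
    _ = liminf (fun k => ∫ ξ, G j ξ ∂(μk k)) atTop + ε := by rw [hliminfG]
    _ ≤ liminf (fun k => ∫ ξ, fk k ξ ∂(μk k)) atTop + ε := by linarith [hlift]

private theorem liminf_le_liminf_comp {u : ℕ → ℝ} {φ : ℕ → ℕ}
    (hφ : Tendsto φ atTop atTop) (M : ℝ) (hb : ∀ k, |u k| ≤ M) :
    liminf u atTop ≤ liminf (fun k => u (φ k)) atTop := by
  have h1 : liminf (u ∘ φ) atTop = liminf u (map φ atTop) := Filter.liminf_comp u φ atTop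
  have h2 : map φ atTop ≤ atTop := hφ
  haveI : (map φ atTop).NeBot := map_neBot (f := atTop) (m := φ)
  have h3 : liminf u atTop ≤ liminf u (map φ atTop) := by
    refine liminf_le_liminf_of_le h2 ?_ ?_
    · exact isBoundedUnder_of ⟨-M, fun k => (abs_le.mp (hb k)).1⟩
    · refine IsBoundedUnder.isCoboundedUnder_ge ?_
      exact isBoundedUnder_of ⟨M, fun k => (abs_le.mp (hb k)).2⟩
  exact le_trans h3 (le_of_eq h1.symm)

end auxiliary

set_option maxHeartbeats 1000000 in
/-- Proposition 3.1: sufficient conditions under weak convergence. -/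
theorem weak_convergence_perturbation
    {d n : ℕ}
    (Ξ : Set (EuclideanSpace ℝ (Fin d))) (hΞne : Ξ.Nonempty) (hΞcl : IsClosed Ξ)
    (μ : Measure (EuclideanSpace ℝ (Fin d))) [IsProbabilityMeasure μ] (hμΞ : μ Ξᶜ = 0)
    (μs : ℕ → Measure (EuclideanSpace ℝ (Fin d))) [∀ ν, IsProbabilityMeasure (μs ν)]
    (hμsΞ : ∀ ν, μs ν Ξᶜ = 0)
    (hweak : ∀ ℓ : EuclideanSpace ℝ (Fin d) → ℝ, ContinuousOn ℓ Ξ →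
        (∃ C : ℝ, ∀ ξ ∈ Ξ, |ℓ ξ| ≤ C) →
        Tendsto (fun ν => ∫ ξ in Ξ, ℓ ξ ∂(μs ν)) atTop (𝓝 (∫ ξ in Ξ, ℓ ξ ∂μ)))
    (g : EuclideanSpace ℝ (Fin d) → EuclideanSpace ℝ (Fin n) → ℝ)
    (gs : ℕ → EuclideanSpace ℝ (Fin d) → EuclideanSpace ℝ (Fin n) → ℝ)
    (hgmeas : Measurable fun q : EuclideanSpace ℝ (Fin d) × EuclideanSpace ℝ (Fin n) =>
      g q.1 q.2)
    (hglsc : ∀ ξ, LowerSemicontinuous (g ξ))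
    (hbd : ∀ x, ∃ ε > 0, ∃ M : ℝ, ∀ ξ ∈ Ξ, ∀ y ∈ closedBall x ε,
        |g ξ y| ≤ M ∧ ∀ ν, |gs ν ξ y| ≤ M)
    (hyp_i : ∀ ν x, ContinuousOn (fun ξ => gs ν ξ x) Ξ)
    (hyp_ii : ∀ ξ ∈ Ξ, ∀ ξs : ℕ → EuclideanSpace ℝ (Fin d), (∀ ν, ξs ν ∈ Ξ) →
        Tendsto ξs atTop (𝓝 ξ) →
        ∀ (x : EuclideanSpace ℝ (Fin n)) (xs : ℕ → EuclideanSpace ℝ (Fin n)),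
        Tendsto xs atTop (𝓝 x) →
        g ξ x ≤ liminf (fun ν => gs ν (ξs ν) (xs ν)) atTop) :
    (∀ N : ℕ → ℕ, StrictMono N →
      ∀ (x : EuclideanSpace ℝ (Fin n)) (xs : ℕ → EuclideanSpace ℝ (Fin n)),
      Tendsto xs atTop (𝓝 x) →
      (∫ ξ, g ξ x ∂μ) ≤ liminf (fun k => ∫ ξ, gs (N k) ξ (xs k) ∂(μs (N k))) atTop) ∧
    (∀ x0 : EuclideanSpace ℝ (Fin n), ∃ i0 : ℕ → ℕ,
      Monotone i0 ∧ Tendsto i0 atTop atTop ∧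
      ∀ iseq : ℕ → ℕ, Monotone iseq → Tendsto iseq atTop atTop → (∀ ν, iseq ν ≤ i0 ν) →
        ∀ᶠ ν in atTop,
          |(∫ ξ, gs (iseq ν) ξ x0 ∂(μs ν)) - ∫ ξ, gs (iseq ν) ξ x0 ∂μ| ≤
            1 / (iseq ν : ℝ)) := by
  constructor
  case left =>
    
    intro N hN x xs hxs
    obtain ⟨ε, hε, M, hM⟩ := hbd x
    obtain ⟨K, hK⟩ : ∃ K, ∀ k ≥ K, xs k ∈ closedBall x ε := by
      have := hxs.eventually (closedBall_mem_nhds x hε)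
      rwa [eventually_atTop] at this
    set φ : ℕ → ℕ := fun k => N (k + K) with hφdef
    have hφmono : StrictMono φ := fun a b hab => hN (by omega)
    have hφtop : Tendsto φ atTop atTop := hφmono.tendsto_atTop
    have hkey := key_liminf Ξ hΞne hΞcl μ hμΞ (fun k => μs (φ k)) (fun k => hμsΞ (φ k))
      (fun ℓ hc hb => (hweak ℓ hc hb).comp hφtop)
      (fun ξ => g ξ x) (hgmeas.comp (measurable_id.prodMk measurable_const))
      (fun k ξ => gs (φ k) ξ (xs (k + K))) (fun k => hyp_i (φ k) (xs (k + K)))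
      M (fun ξ hξ => (hM ξ hξ x (mem_closedBall_self hε.le)).1)
      (fun k ξ hξ => (hM ξ hξ (xs (k + K)) (hK (k + K) (Nat.le_add_left K k))).2 (φ k))
      ?_
    · -- transfer the liminf over the shifted subsequence to the original
      refine le_trans hkey ?_
      have := Filter.liminf_nat_add (fun k => ∫ ξ, gs (N k) ξ (xs k) ∂(μs (N k))) K
      rw [← this]
    · -- the lsc hypothesis for the subsequence
      intro ξ hξ ξs hξsΞ hξst
      set r : ℕ → ℕ := fun ν => Nat.findGreatest (fun k => φ k ≤ ν) ν with hrdef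
      have hrφ : ∀ k, r (φ k) = k := by
        intro k
        refine le_antisymm ?_ (Nat.le_findGreatest hφmono.le_apply le_rfl)
        have hspec : φ (r (φ k)) ≤ φ k :=
          Nat.findGreatest_spec (P := fun j => φ j ≤ φ k) (m := k) hφmono.le_apply le_rfl
        exact hφmono.le_iff_le.mp hspec
      have hrmono : Monotone r := fun a b hab =>
        Nat.findGreatest_mono (fun j hj => le_trans hj hab) hab
      have hrtop : Tendsto r atTop atTop := by
        rw [tendsto_atTop_atTop]
        intro b
        refine ⟨φ b, fun a ha => ?_⟩
        exact Nat.le_findGreatest (le_trans hφmono.le_apply ha) ha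
      set ζs : ℕ → EuclideanSpace ℝ (Fin d) := fun ν => ξs (r ν) with hζsdef
      set ys : ℕ → EuclideanSpace ℝ (Fin n) := fun ν => xs (r ν + K) with hysdef
      have hζstend : Tendsto ζs atTop (𝓝 ξ) := hξst.comp hrtop
      have hystend : Tendsto ys atTop (𝓝 x) := by
        refine hxs.comp ?_
        rw [tendsto_atTop_atTop] at hrtop ⊢
        intro b
        obtain ⟨i, hi⟩ := hrtop b
        exact ⟨i, fun a ha => le_trans (hi a ha) (Nat.le_add_right _ _)⟩
      have hmain := hyp_ii ξ hξ ζs (fun ν => hξsΞ (r ν)) hζstend x ys hystend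
      have hbound : ∀ ν, |gs ν (ζs ν) (ys ν)| ≤ M := by
        intro ν
        exact (hM (ζs ν) (hξsΞ (r ν)) (ys ν) (hK (r ν + K) (Nat.le_add_left K (r ν)))).2 ν
      have hsub := liminf_le_liminf_comp (u := fun ν => gs ν (ζs ν) (ys ν)) hφtop M hbound
      have heq : (fun k => gs (φ k) (ζs (φ k)) (ys (φ k))) =
          fun k => gs (φ k) (ξs k) (xs (k + K)) := by
        funext k
        rw [hζsdef, hysdef]
        simp only [hrφ k]
      rw [heq] at hsub
      exact le_trans hmain hsub
  case right =>
    
    intro x0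
    classical
    obtain ⟨ε, hε, M, hM⟩ := hbd x0
    have hres : ∀ (m : Measure (EuclideanSpace ℝ (Fin d))), m Ξᶜ = 0 → m.restrict Ξ = m :=
      fun m hm => Measure.restrict_eq_self_of_ae_mem (mem_ae_iff.mpr hm)
    have hres1 : μ.restrict Ξ = μ := hres μ hμΞ
    have hres2 : ∀ ν, (μs ν).restrict Ξ = μs ν := fun ν => hres _ (hμsΞ ν)
    have hconv : ∀ i, Tendsto (fun ν => ∫ ξ, gs i ξ x0 ∂(μs ν)) atTop
        (𝓝 (∫ ξ, gs i ξ x0 ∂μ)) := by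
      intro i
      have := hweak (fun ξ => gs i ξ x0) (hyp_i i x0)
        ⟨M, fun ξ hξ => (hM ξ hξ x0 (mem_closedBall_self hε.le)).2 i⟩
      simpa only [hres1, hres2] using this
    have hD : ∀ i : ℕ, ∃ m : ℕ, ∀ ν ≥ m,
        |(∫ ξ, gs (i+1) ξ x0 ∂(μs ν)) - ∫ ξ, gs (i+1) ξ x0 ∂μ| ≤ 1 / ((i:ℝ)+1) := by
      intro i
      have h := hconv (i+1)
      rw [Metric.tendsto_atTop] at h
      obtain ⟨m, hm⟩ := h (1 / ((i:ℝ)+1)) (by positivity)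
      refine ⟨m, fun ν hν => ?_⟩
      have := hm ν hν
      rw [Real.dist_eq] at this
      exact this.le
    choose m hm using hD
    set Nn : ℕ → ℕ := fun i => if i = 0 then 0 else max i ((Finset.range i).sup m) with hNn
    have hNnmono : Monotone Nn := by
      intro a b hab
      rw [hNn]
      dsimp only
      rcases Nat.eq_zero_or_pos a with ha | ha
      · simp [ha]
      · rw [if_neg (by omega), if_neg (by omega)]
        exact max_le_max hab (Finset.sup_mono (Finset.range_subset_range.mpr hab))
    have hNnself : ∀ i, i ≤ Nn i := by
      intro i
      rw [hNn]
      dsimp only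
      rcases Nat.eq_zero_or_pos i with ha | ha
      · omega
      · rw [if_neg (by omega)]; exact le_max_left _ _
    set i0 : ℕ → ℕ := fun ν => Nat.findGreatest (fun i => Nn i ≤ ν) ν with hi0
    refine ⟨i0, ?_, ?_, ?_⟩
    · intro a b hab
      exact Nat.findGreatest_mono (fun j hj => le_trans hj hab) hab
    · rw [tendsto_atTop_atTop]
      intro b
      refine ⟨Nn b, fun a ha => ?_⟩
      exact Nat.le_findGreatest (le_trans (hNnself b) ha) ha
    · intro iseq hmono htop hle
      have h1 : ∀ᶠ ν in atTop, 1 ≤ iseq ν := htop.eventually_ge_atTop 1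
      filter_upwards [h1] with ν hν
      have h2 : Nn (i0 ν) ≤ ν :=
        Nat.findGreatest_spec (P := fun i => Nn i ≤ ν) (m := 0) (Nat.zero_le ν)
          (by rw [hNn]; simp)
      have h3 : Nn (iseq ν) ≤ ν := le_trans (hNnmono (hle ν)) h2
      set i := iseq ν with hidef
      have hipos : 1 ≤ i := hν
      have h4 : m (i - 1) ≤ Nn i := by
        rw [hNn]
        dsimp only
        rw [if_neg (by omega)]
        exact le_trans (Finset.le_sup (Finset.mem_range.mpr (by omega))) (le_max_right _ _)
      have h5 := hm (i - 1) ν (le_trans h4 h3)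
      have h6 : i - 1 + 1 = i := by omega
      rw [h6] at h5
      have h8 : ((i - 1 : ℕ) : ℝ) + 1 = (i : ℝ) := by
        have : i - 1 + 1 = i := by omega
        exact_mod_cast congrArg (Nat.cast : ℕ → ℝ) this
      rw [h8] at h5
      exact h5

end
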